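/- Let $M$ be a $2d$-dimensional symplectic space over a finite field $k = \mathbb{F}_q$, $q$ odd, $\psi$ a nontrivial additive character. For lagrangian subspaces $N, L$ with $N \cap L = 0$, let $\bar{L} = L \times k$ and $\bar{N} = N \times k$ as subgroups of the Heisenberg group $H = M \times k$ with product $(m_1,a_1)(m_2,a_2) = (m_1+m_2, a_1+a_2+\tfrac12\omega\langle m_1,m_2\rangle)$. Define $\tilde F_{N,L}: H \to \mathbb{C}$ by $\tilde F_{N,L}(h) = \chi_N(\bar n)\chi_L(\bar l)$ if $h = \bar n \bar l$ with $\bar n \in \bar N, \bar l \in \bar L$, and $0$ otherwise, where $\chi_L(l,a) = \psi(a)$. Then the convolution satisfies $\tilde F_{L,N} * \tilde F_{N,L} = q^{2d+1}\, \tilde F_{L,L}$, where $(f_1 * f_2)(h) = \sum_{v \in H} f_1(hv^{-1}) f_2(v)$. -/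

import Mathlib

/-!
STATEMENT 4.  Heisenberg group `H = M × k` with product
`(m₁,a₁)(m₂,a₂) = (m₁+m₂, a₁+a₂+½ω⟨m₁,m₂⟩)`.  For transverse lagrangians
`N, L`, with `F̃_{N,L}` the function supported on `N̄·L̄` with
`F̃_{N,L}(n̄ l̄) = χ_N(n̄)χ_L(l̄)`, the convolution satisfies
`F̃_{L,N} * F̃_{N,L} = q^{2d+1} F̃_{L,L}`.
-/

/-- Heisenberg group multiplication on `M × k`. -/
def Hmul {k M : Type*} [Field k] [AddCommGroup M] [Module k M]
    (ω : M →ₗ[k] M →ₗ[k] k) (h₁ h₂ : M × k) : M × k :=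
  (h₁.1 + h₂.1, h₁.2 + h₂.2 + 2⁻¹ * ω h₁.1 h₂.1)

/-- Heisenberg group inversion on `M × k`. -/
def Hinv {k M : Type*} [Field k] [AddCommGroup M] [Module k M]
    (h : M × k) : M × k :=
  (-h.1, -h.2)

theorem statement4 {k M : Type*} [Field k] [Fintype k]
    [AddCommGroup M] [Module k M] [Fintype M]
    (hchar : ringChar k ≠ 2) (d : ℕ)
    (hdim : Module.finrank k M = 2 * d)
    (ω : M →ₗ[k] M →ₗ[k] k)
    (halt : ∀ m : M, ω m m = 0)
    (hnd : ∀ m : M, (∀ m' : M, ω m m' = 0) → m = 0)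
    (ψ : AddChar k ℂ) (hψ : ∃ a : k, ψ a ≠ 1)
    (N L : Submodule k M)
    (hN : LinearMap.BilinForm.orthogonal ω N = N)
    (hL : LinearMap.BilinForm.orthogonal ω L = L)
    (hNL : N ⊓ L = ⊥)
    (FNL FLN FLL : M × k → ℂ)
    -- F̃_{N,L} equals χ_N ⊗ χ_L on N̄·L̄ and vanishes elsewhere
    (hFNL : ∀ n ∈ N, ∀ l ∈ L, ∀ aₙ aₗ : k,
      FNL (Hmul ω (n, aₙ) (l, aₗ)) = ψ aₙ * ψ aₗ)
    (hFNL0 : ∀ h : M × k,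
      (¬ ∃ n ∈ N, ∃ l ∈ L, ∃ aₙ aₗ : k, h = Hmul ω (n, aₙ) (l, aₗ)) → FNL h = 0)
    (hFLN : ∀ l ∈ L, ∀ n ∈ N, ∀ aₗ aₙ : k,
      FLN (Hmul ω (l, aₗ) (n, aₙ)) = ψ aₗ * ψ aₙ)
    (hFLN0 : ∀ h : M × k,
      (¬ ∃ l ∈ L, ∃ n ∈ N, ∃ aₗ aₙ : k, h = Hmul ω (l, aₗ) (n, aₙ)) → FLN h = 0)
    (hFLL : ∀ l ∈ L, ∀ a : k, FLL (l, a) = ψ a)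
    (hFLL0 : ∀ h : M × k, h.1 ∉ L → FLL h = 0) :
    ∀ h : M × k,
      (∑ v : M × k, FLN (Hmul ω h (Hinv v)) * FNL v)
        = (Fintype.card k : ℂ) ^ (2 * d + 1) * FLL h := by
  classical
  -- two is invertible
  have h2 : (2 : k) ≠ 0 := Ring.two_ne_zero hchar
  -- skew symmetry
  have hskew : ∀ x y : M, ω x y = - ω y x := by
    intro x y
    have h := halt (x + y)
    simp only [map_add, LinearMap.add_apply, halt] at h
    linear_combination h
  have hrefl : LinearMap.BilinForm.IsRefl ω := by
    intro x y hxy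
    rw [hskew y x, hxy, neg_zero]
  have hndeg : LinearMap.BilinForm.Nondegenerate ω :=
    (LinearMap.IsRefl.nondegenerate_iff_separatingLeft hrefl).2 hnd
  -- vanishing on N and on L
  have hNN : ∀ x ∈ N, ∀ y ∈ N, ω x y = 0 := by
    intro x hx y hy
    have : y ∈ LinearMap.BilinForm.orthogonal ω N := by rw [hN]; exact hy
    exact this x hx
  have hLLz : ∀ x ∈ L, ∀ y ∈ L, ω x y = 0 := by
    intro x hx y hy
    have : y ∈ LinearMap.BilinForm.orthogonal ω L := by rw [hL]; exact hy
    exact this x hx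
  have : FiniteDimensional k M := Module.Finite.of_finite
  -- dimensions
  have hdN : Module.finrank k N = d := by
    have h2' := LinearMap.BilinForm.finrank_add_finrank_orthogonal (B := ω) hrefl N
    rw [hN, LinearMap.BilinForm.orthogonal_top_eq_bot hndeg, inf_bot_eq, finrank_bot,
      hdim] at h2'
    omega
  have hdL : Module.finrank k L = d := by
    have h2' := LinearMap.BilinForm.finrank_add_finrank_orthogonal (B := ω) hrefl L
    rw [hL, LinearMap.BilinForm.orthogonal_top_eq_bot hndeg, inf_bot_eq, finrank_bot,
      hdim] at h2'
    omega
  have htop : N ⊔ L = ⊤ := by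
    apply Submodule.eq_top_of_finrank_eq
    have := Submodule.finrank_sup_add_finrank_inf_eq N L
    rw [hNL, finrank_bot] at this
    omega
  have hcompl : IsCompl N L := ⟨disjoint_iff.2 hNL, codisjoint_iff.2 htop⟩
  have cardN : (Fintype.card N : ℂ) = (Fintype.card k : ℂ) ^ d := by
    rw [Module.card_eq_pow_finrank (K := k) (V := N), hdN]; push_cast; ring
  have cardL : (Fintype.card L : ℂ) = (Fintype.card k : ℂ) ^ d := by
    rw [Module.card_eq_pow_finrank (K := k) (V := L), hdL]; push_cast; ring
  -- value lemmas
  have valNL : ∀ n ∈ N, ∀ l ∈ L, ∀ c : k, FNL (n + l, c) = ψ (c - 2⁻¹ * ω n l) := by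
    intro n hn l hl c
    have h := hFNL n hn l hl (c - 2⁻¹ * ω n l) 0
    rw [show Hmul ω (n, c - 2⁻¹ * ω n l) (l, 0) = (n + l, c) by
      simp only [Hmul]; refine Prod.ext rfl ?_; ring] at h
    simpa using h
  have valLN : ∀ n ∈ N, ∀ l ∈ L, ∀ c : k, FLN (n + l, c) = ψ (c + 2⁻¹ * ω n l) := by
    intro n hn l hl c
    have h := hFLN l hl n hn (c + 2⁻¹ * ω n l) 0
    rw [show Hmul ω (l, c + 2⁻¹ * ω n l) (n, 0) = (n + l, c) by
      simp only [Hmul]; refine Prod.ext (add_comm l n) ?_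
      have := hskew n l; linear_combination 2⁻¹ * this] at h
    simpa using h
  -- main computation
  rintro ⟨m, a⟩
  obtain ⟨n₀, hn₀, l₀, hl₀, hm⟩ : ∃ n₀ ∈ N, ∃ l₀ ∈ L, n₀ + l₀ = m := by
    have : m ∈ N ⊔ L := by rw [htop]; trivial
    exact Submodule.mem_sup.1 this
  subst hm
  -- reindex sum
  let E : ((N × L) × k) ≃ (M × k) :=
    ((Submodule.prodEquivOfIsCompl N L hcompl).toEquiv.prodCongr (Equiv.refl k))
  rw [← Equiv.sum_comp E (fun v => FLN (Hmul ω (n₀ + l₀, a) (Hinv v)) * FNL v)]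
  have hE : ∀ x : (N × L) × k, E x = ((x.1.1 : M) + (x.1.2 : M), x.2) := by
    intro x; rfl
  -- per-term value
  have hterm : ∀ x : (N × L) × k,
      FLN (Hmul ω (n₀ + l₀, a) (Hinv (E x))) * FNL (E x)
        = ψ (a + 2⁻¹ * ω n₀ l₀) * ψ (-(ω n₀ (x.1.2 : M))) := by
    rintro ⟨⟨n, l⟩, b⟩
    rw [hE]
    simp only
    have h1 : Hmul ω (n₀ + l₀, a) (Hinv ((n : M) + (l : M), b))
        = (((n₀ - n) : M) + ((l₀ - l) : M), a - b - 2⁻¹ * ω (n₀ + l₀) ((n : M) + (l : M))) := by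
      simp only [Hmul, Hinv, map_neg]
      refine Prod.ext (by abel) (by ring)
    rw [h1, valLN _ (sub_mem hn₀ n.2) _ (sub_mem hl₀ l.2),
      valNL _ n.2 _ l.2, ← AddChar.map_add_eq_mul, ← AddChar.map_add_eq_mul]
    congr 1
    have e1 : ω n₀ (n : M) = 0 := hNN _ hn₀ _ n.2
    have e2 : ω l₀ (l : M) = 0 := hLLz _ hl₀ _ l.2
    have e3 : ω (l₀ : M) (n : M) = - ω (n : M) (l₀ : M) := hskew _ _
    simp only [map_add, map_sub, LinearMap.add_apply, LinearMap.sub_apply]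
    have h4 : (2:k)⁻¹ * 2 = 1 := inv_mul_cancel₀ h2
    linear_combination (-(2:k)⁻¹) * e1 - 2⁻¹ * e2 - 2⁻¹ * e3 - ((ω n₀) ↑l) * h4
  simp only [hterm]
  -- split the sum
  rw [Fintype.sum_prod_type]
  simp only [Finset.sum_const, Finset.card_univ, nsmul_eq_mul]
  rw [Fintype.sum_prod_type]
  simp only [← Finset.mul_sum, Finset.sum_const, Finset.card_univ, nsmul_eq_mul]
  by_cases hz : n₀ = 0
  · -- n₀ = 0 : the support case
    subst hz
    simp only [map_zero, LinearMap.zero_apply, neg_zero, mul_zero, add_zero,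
      AddChar.map_zero_eq_one, zero_add]
    rw [hFLL l₀ hl₀ a]
    simp only [Finset.sum_const, Finset.card_univ, nsmul_eq_mul, mul_one]
    rw [cardN, cardL]
    ring
  · -- n₀ ≠ 0 : both sides vanish
    have hnonz : ∃ y ∈ L, ω n₀ y ≠ 0 := by
      by_contra hcon
      push_neg at hcon
      apply hz
      have hmem : n₀ ∈ LinearMap.BilinForm.orthogonal ω L := by
        rw [LinearMap.BilinForm.mem_orthogonal_iff]
        intro x hx
        exact hrefl _ _ (hcon x hx)
      rw [hL] at hmem
      have : n₀ ∈ N ⊓ L := ⟨hn₀, hmem⟩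
      rw [hNL] at this
      exact this
    have hSzero : (∑ y : ↥L, ψ (-((ω n₀) (y : M)))) = 0 := by
      let f : ↥L →+ k :=
        { toFun := fun y => -((ω n₀) (y : M))
          map_zero' := by simp
          map_add' := by
            intro x y
            simp only [Submodule.coe_add, map_add]
            ring }
      have hsum : (∑ y : ↥L, (ψ.compAddMonoidHom f) y) = 0 := by
        rw [AddChar.sum_eq_ite, if_neg]
        intro hzero
        rw [AddChar.eq_zero_iff] at hzero
        obtain ⟨y, hyL, hy⟩ := hnonz
        obtain ⟨a₀, ha₀⟩ := hψ
        have hy' : (-a₀ * ((ω n₀) y)⁻¹) • y ∈ L := Submodule.smul_mem _ _ hyL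
        have hval : f ⟨_, hy'⟩ = a₀ := by
          show -((ω n₀) ((-a₀ * ((ω n₀) y)⁻¹) • y)) = a₀
          rw [map_smul, smul_eq_mul]
          field_simp
        have := hzero ⟨_, hy'⟩
        rw [AddChar.compAddMonoidHom_apply, hval] at this
        exact ha₀ this
      exact hsum
    rw [hSzero, hFLL0 (n₀ + l₀, a) ?_]
    · ring
    · intro hmem
      apply hz
      have : n₀ ∈ N ⊓ L := ⟨hn₀, by
        have : (n₀ + l₀) - l₀ ∈ L := Submodule.sub_mem _ hmem hl₀
        simpa using this⟩
      rw [hNL] at this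
      exact this
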